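/- Telescoping sum bound: if b : ℕ → ℝ is nonincreasing, nonnegative, with b(n) → 0, and G : (0, b(0)] → ℝ is nondecreasing with G(v) = (1/v)exp(−C/v) for a constant C ≥ b(0) > 0, then ∑_{m≥0} exp(−C/(b(n_m) − b(n_{m+1}))) ≤ exp(−C/b(0)) for any strictly increasing sequence (n_m) with n_0 = 0, where terms with b(n_m) = b(n_{m+1}) are interpreted as 0. -/

import Mathlib

/-- Key pointwise bound: for `0 < u ≤ v ≤ C`,
`exp(-C/u) ≤ (u/v) * exp(-C/v)`. -/
lemma exp_div_key (C u v : ℝ) (hu : 0 < u) (huv : u ≤ v) (hvC : v ≤ C) :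
    Real.exp (-C / u) ≤ (u / v) * Real.exp (-C / v) := by
  have hv : 0 < v := lt_of_lt_of_le hu huv
  have h1 : v / u ≤ Real.exp (C / u - C / v) := by
    have hstep : v / u - 1 ≤ C / u - C / v := by
      rw [div_sub_div _ _ (ne_of_gt hu) (ne_of_gt hv)]
      have : v / u - 1 = v * (v - u) / (u * v) := by
        field_simp
      rw [this]
      apply div_le_div_of_nonneg_right _ (by positivity)
      have : 0 ≤ v - u := by linarith
      nlinarith
    calc v / u = 1 + (v / u - 1) := by ring
    _ ≤ 1 + (C / u - C / v) := by linarith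
    _ ≤ Real.exp (C / u - C / v) := by
        have := Real.add_one_le_exp (C / u - C / v); linarith
  have h2 : Real.exp (-C / u) = Real.exp (-C / v) * Real.exp (-(C / u - C / v)) := by
    rw [← Real.exp_add]; ring_nf
  rw [h2, Real.exp_neg]
  have h3 : Real.exp (-(C / u - C / v)) ≤ u / v := by
    rw [Real.exp_neg]
    rw [inv_le_iff_one_le_mul₀ (Real.exp_pos _)] at *
    calc (1 : ℝ) = (u / v) * (v / u) := by field_simp
    _ ≤ (u / v) * Real.exp (C / u - C / v) := by
        apply mul_le_mul_of_nonneg_left h1 (by positivity)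
  calc Real.exp (-C / v) * (Real.exp (C / u - C / v))⁻¹
      ≤ Real.exp (-C / v) * (u / v) := by
        apply mul_le_mul_of_nonneg_left _ (Real.exp_pos _).le
        rw [← Real.exp_neg]; exact h3
  _ = (u / v) * Real.exp (-C / v) := by ring

/-- Telescoping sum bound: for `b` nonincreasing, nonnegative, tending to 0,
`C ≥ b 0 > 0`, and strictly increasing indices `n 0 = 0 < n 1 < …`,
`∑_m exp(−C/(b (n m) − b (n (m+1)))) ≤ exp(−C/b 0)`, where terms with
`b (n m) = b (n (m+1))` are interpreted as `0`. -/
theorem telescoping_exp_sum_bound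
    (b : ℕ → ℝ) (hmono : Antitone b) (hnonneg : ∀ n, 0 ≤ b n)
    (hlim : Filter.Tendsto b Filter.atTop (nhds 0))
    (C : ℝ) (hb0 : 0 < b 0) (hC : b 0 ≤ C)
    (n : ℕ → ℕ) (hn : StrictMono n) (hn0 : n 0 = 0) :
    (∑' m : ℕ, if b (n m) - b (n (m + 1)) = 0 then 0
      else Real.exp (-C / (b (n m) - b (n (m + 1))))) ≤ Real.exp (-C / b 0) := by
  set g : ℕ → ℝ := fun m => b (n m) - b (n (m + 1)) with hg
  have hg_nonneg : ∀ m, 0 ≤ g m := fun m =>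
    sub_nonneg.mpr (hmono (hn.monotone (Nat.le_succ m)))
  have hrange : ∀ M, ∑ i ∈ Finset.range M, g i = b 0 - b (n M) := by
    intro M
    have := Finset.sum_range_sub' (fun i => b (n i)) M
    simpa [hg, hn0] using this
  -- g is summable with sum b 0
  have hgsummable : Summable g := by
    apply summable_of_sum_range_le hg_nonneg
    intro M
    rw [hrange M]
    have := hnonneg (n M); linarith
  have htend : Filter.Tendsto (fun M => ∑ i ∈ Finset.range M, g i)
      Filter.atTop (nhds (b 0)) := by
    simp only [hrange]
    have : Filter.Tendsto (fun M => b (n M)) Filter.atTop (nhds 0) :=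
      hlim.comp hn.tendsto_atTop
    simpa using (tendsto_const_nhds (x := b 0)).sub this
  have hgsum : ∑' m, g m = b 0 :=
    tendsto_nhds_unique hgsummable.hasSum.tendsto_sum_nat htend
  set K : ℝ := Real.exp (-C / b 0) / b 0 with hK
  have hK_nonneg : 0 ≤ K := by positivity
  -- pointwise bound
  have hpt : ∀ m, (if g m = 0 then 0 else Real.exp (-C / g m)) ≤ g m * K := by
    intro m
    by_cases h : g m = 0
    · simp [h]
    · have hgm : 0 < g m := lt_of_le_of_ne (hg_nonneg m) (Ne.symm h)
      have hgb0 : g m ≤ b 0 := by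
        have h1 : b (n m) ≤ b 0 := hmono (Nat.zero_le _)
        have h2 := hnonneg (n (m + 1))
        simp only [hg]; linarith
      rw [if_neg h]
      have := exp_div_key C (g m) (b 0) hgm hgb0 hC
      calc Real.exp (-C / g m) ≤ (g m / b 0) * Real.exp (-C / b 0) := this
      _ = g m * K := by rw [hK]; ring
  have hmaj : Summable (fun m => g m * K) := hgsummable.mul_right K
  calc (∑' m : ℕ, if g m = 0 then 0 else Real.exp (-C / g m))
      ≤ ∑' m, g m * K := by
        apply Summable.tsum_le_tsum hpt _ hmaj
        · by_cases hs : Summable (fun m : ℕ => if g m = 0 then 0 else Real.exp (-C / g m))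
          · exact hs
          · exact (hs (hmaj.of_nonneg_of_le
              (fun m => by positivity) hpt)).elim
  _ = (∑' m, g m) * K := tsum_mul_right
  _ = b 0 * (Real.exp (-C / b 0) / b 0) := by rw [hgsum, hK]
  _ = Real.exp (-C / b 0) := by field_simp
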